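/- Let b : D → D be holomorphic and α unimodular, and let σ_α be the Clark measure of b. Then for all z, w ∈ D: ∫_T C(z,ζ) C(ζ,w) dσ_α(ζ) = (1 − b(z) conj(b(w))) / ((1 − conj(α) b(z)) (1 − α conj(b(w)))) · C(z,w), where C(z,ζ) = 1/(1 − z conj(ζ)) is the Cauchy kernel. -/

import Mathlib

open Complex Metric MeasureTheory Set

/-- Proposition 2.1 (one variable): for a holomorphic `b : D → D`, unimodular `α`, and the
Clark measure `σ_α` of `b`, the double Cauchy integral identity
`∫ C(z,ζ) C(ζ,w) dσ_α(ζ) = (1 - b z conj(b w)) / ((1 - conj α · b z)(1 - α · conj (b w))) · C(z,w)`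
holds for all `z, w` in the disc, where `C(z,ζ) = (1 - z conj ζ)⁻¹`. -/
lemma one_sub_ne {z ζ : ℂ} (hz : ‖z‖ < 1) (hζ : ‖ζ‖ ≤ 1) : 1 - z * (starRingEnd ℂ) ζ ≠ 0 := by
  intro h
  have h1 : z * (starRingEnd ℂ) ζ = 1 := by linear_combination -h
  have : ‖z * (starRingEnd ℂ) ζ‖ < 1 := by
    rw [norm_mul, RCLike.norm_conj]
    calc ‖z‖ * ‖ζ‖ ≤ ‖z‖ * 1 := by nlinarith [norm_nonneg z]
    _ < 1 := by simpa using hz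
  rw [h1] at this; simp at this

lemma norm_inv_le {z ζ : ℂ} (hz : ‖z‖ < 1) (hζ : ‖ζ‖ ≤ 1) :
    ‖(1 - z * (starRingEnd ℂ) ζ)⁻¹‖ ≤ (1 - ‖z‖)⁻¹ := by
  rw [norm_inv]
  have h1 : 1 - ‖z‖ ≤ ‖1 - z * (starRingEnd ℂ) ζ‖ := by
    have := norm_sub_norm_le (1 : ℂ) (z * (starRingEnd ℂ) ζ)
    have h2 : ‖z * (starRingEnd ℂ) ζ‖ ≤ ‖z‖ := by
      rw [norm_mul, RCLike.norm_conj]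
      nlinarith [norm_nonneg z]
    simp only [norm_one] at this
    linarith
  exact inv_anti₀ (by linarith) h1

lemma re_cauchy {z ζ : ℂ} (hz : ‖z‖ < 1) (hζ : ‖ζ‖ = 1) :
    (1 - ‖z‖ ^ 2) / ‖ζ - z‖ ^ 2 = 2 * ((1 - z * (starRingEnd ℂ) ζ)⁻¹).re - 1 := by
  have hd : (1 : ℂ) - z * (starRingEnd ℂ) ζ = (starRingEnd ℂ) ζ * (ζ - z) := by
    have h0 : ζ * (starRingEnd ℂ) ζ = ((1 : ℝ) : ℂ) := by
      rw [Complex.mul_conj, Complex.normSq_eq_norm_sq, hζ]; norm_num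
    rw [mul_sub, mul_comm ((starRingEnd ℂ) ζ) ζ, h0]; push_cast; ring
  have hne : (1 : ℂ) - z * (starRingEnd ℂ) ζ ≠ 0 := one_sub_ne hz hζ.le
  have hnormd : ‖(1 : ℂ) - z * (starRingEnd ℂ) ζ‖ = ‖ζ - z‖ := by
    rw [hd, norm_mul, RCLike.norm_conj, hζ, one_mul]
  have hns : Complex.normSq (1 - z * (starRingEnd ℂ) ζ) = ‖ζ - z‖ ^ 2 := by
    rw [← Complex.sq_norm, hnormd]
  have hnsz : Complex.normSq z = ‖z‖ ^ 2 := by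
    rw [← Complex.sq_norm]
  have hnsζ : Complex.normSq ζ = 1 := by
    rw [← Complex.sq_norm, hζ]; norm_num
  have hkey : ‖ζ - z‖ ^ 2 = ‖z‖ ^ 2 - 1 + 2 * (1 - z * (starRingEnd ℂ) ζ).re := by
    rw [← hns, Complex.normSq_sub, Complex.normSq_one, Complex.normSq_mul,
      Complex.normSq_conj, hnsζ, hnsz]
    simp only [one_mul, Complex.conj_re, Complex.sub_re, Complex.one_re, mul_one]
    ring
  have hpos : (0:ℝ) < ‖ζ - z‖ ^ 2 := by
    rw [← hns]
    exact lt_of_le_of_ne (Complex.normSq_nonneg _) (Ne.symm (by simpa [Complex.normSq_eq_zero] using hne))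
  rw [Complex.inv_re, hns]
  generalize hrr : (1 - z * (starRingEnd ℂ) ζ).re = r at hkey ⊢
  generalize haa : ‖z‖ ^ 2 = a at hkey ⊢
  rw [hkey] at hpos ⊢
  field_simp
  ring

lemma ae_sphere (σ : Measure ℂ) (hσsupp : σ (sphere (0 : ℂ) 1)ᶜ = 0) :
    ∀ᵐ ζ ∂σ, ‖ζ‖ = 1 := by
  have : ∀ᵐ ζ ∂σ, ζ ∈ sphere (0 : ℂ) 1 := by
    rw [MeasureTheory.ae_iff]
    rw [show {a : ℂ | ¬ a ∈ sphere (0:ℂ) 1} = (sphere (0:ℂ) 1)ᶜ from rfl]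
    exact hσsupp
  filter_upwards [this] with ζ hζ
  simpa [mem_sphere_iff_norm] using hζ

lemma integrable_aux (σ : Measure ℂ) [IsFiniteMeasure σ]
    (hσsupp : σ (sphere (0 : ℂ) 1)ᶜ = 0) {f : ℂ → ℂ} (hm : Measurable f) {M : ℝ}
    (hM : ∀ ζ : ℂ, ‖ζ‖ = 1 → ‖f ζ‖ ≤ M) : Integrable f σ := by
  refine Integrable.mono' (integrable_const M) hm.aestronglyMeasurable ?_
  filter_upwards [ae_sphere σ hσsupp] with ζ hζ
  exact hM ζ hζ

lemma meas1 (z : ℂ) : Measurable fun ζ : ℂ => (1 - z * (starRingEnd ℂ) ζ)⁻¹ :=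
  ((measurable_const.sub (measurable_const.mul (Complex.continuous_conj.measurable))).inv)

lemma meas2 (w : ℂ) : Measurable fun ζ : ℂ => (1 - ζ * (starRingEnd ℂ) w)⁻¹ :=
  ((measurable_const.sub (measurable_id.mul measurable_const)).inv)

lemma norm_le_of_mem_ball {z₀ x : ℂ} (hz₀ : ‖z₀‖ < 1) (hx : x ∈ ball z₀ ((1 - ‖z₀‖)/2)) :
    ‖x‖ ≤ (1 + ‖z₀‖)/2 := by
  rw [mem_ball, dist_eq_norm] at hx
  have := norm_sub_norm_le x z₀
  linarith

lemma Fdiff (σ : Measure ℂ) [IsFiniteMeasure σ] (hσsupp : σ (sphere (0 : ℂ) 1)ᶜ = 0) :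
    DifferentiableOn ℂ (fun z => ∫ ζ, (1 - z * (starRingEnd ℂ) ζ)⁻¹ ∂σ) (ball (0:ℂ) 1) := by
  intro z₀ hz₀
  rw [mem_ball_zero_iff] at hz₀
  set ε : ℝ := (1 - ‖z₀‖)/2 with hε
  have hεpos : 0 < ε := by simp only [hε]; linarith
  set r : ℝ := (1 + ‖z₀‖)/2 with hrdef
  have hr1 : r < 1 := by simp only [hrdef]; linarith
  have hr0 : 0 ≤ r := by positivity
  have key := hasDerivAt_integral_of_dominated_loc_of_deriv_le (μ := σ)
    (F := fun x ζ => (1 - x * (starRingEnd ℂ) ζ)⁻¹)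
    (F' := fun x ζ => (starRingEnd ℂ) ζ * ((1 - x * (starRingEnd ℂ) ζ)^2)⁻¹)
    (x₀ := z₀) (bound := fun _ => ((1 - r)⁻¹)^2) (ball_mem_nhds z₀ hεpos)
    (Filter.Eventually.of_forall fun x => (meas1 x).aestronglyMeasurable)
    (integrable_aux σ hσsupp (meas1 z₀) (fun ζ hζ => norm_inv_le hz₀ hζ.le))
    (((Complex.continuous_conj.measurable).mul
      (((measurable_const.sub (measurable_const.mul Complex.continuous_conj.measurable)).pow_const 2).inv)).aestronglyMeasurable)
    ?_ (integrable_const _) ?_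
  · exact key.2.differentiableAt.differentiableWithinAt
  · filter_upwards [ae_sphere σ hσsupp] with ζ hζ
    intro x hx
    have hxr : ‖x‖ ≤ r := norm_le_of_mem_ball hz₀ hx
    have hx1 : ‖x‖ < 1 := lt_of_le_of_lt hxr hr1
    have h1 : ‖(starRingEnd ℂ) ζ * ((1 - x * (starRingEnd ℂ) ζ)^2)⁻¹‖
        = ‖(1 - x * (starRingEnd ℂ) ζ)⁻¹‖^2 := by
      rw [norm_mul, RCLike.norm_conj, hζ, one_mul, ← inv_pow, norm_pow]
    rw [h1]
    have h2 : ‖(1 - x * (starRingEnd ℂ) ζ)⁻¹‖ ≤ (1 - ‖x‖)⁻¹ := norm_inv_le hx1 hζ.le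
    have h3 : (1 - ‖x‖)⁻¹ ≤ (1 - r)⁻¹ := by
      apply inv_anti₀ (by linarith) (by linarith)
    have h4 : (0:ℝ) ≤ ‖(1 - x * (starRingEnd ℂ) ζ)⁻¹‖ := norm_nonneg _
    nlinarith
  · filter_upwards [ae_sphere σ hσsupp] with ζ hζ
    intro x hx
    have hx1 : ‖x‖ < 1 := lt_of_le_of_lt (norm_le_of_mem_ball hz₀ hx) hr1
    have hne : (1 : ℂ) - x * (starRingEnd ℂ) ζ ≠ 0 := one_sub_ne hx1 hζ.le
    have h1 : HasDerivAt (fun y : ℂ => 1 - y * (starRingEnd ℂ) ζ) (-(starRingEnd ℂ) ζ) x := by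
      simpa using ((hasDerivAt_id x).mul_const ((starRingEnd ℂ) ζ)).const_sub 1
    have := h1.inv hne
    simpa [div_eq_mul_inv, neg_div, mul_comm, Pi.inv_def] using this

lemma const_of_re {f : ℂ → ℂ} (hf : DifferentiableOn ℂ f (ball (0:ℂ) 1)) {c : ℝ}
    (hre : ∀ z ∈ ball (0:ℂ) 1, (f z).re = c) : ∀ z ∈ ball (0:ℂ) 1, f z = f 0 := by
  have h0 : (0:ℂ) ∈ ball (0:ℂ) 1 := mem_ball_self one_pos
  have hφd : DifferentiableOn ℂ (fun z => Complex.exp (f z)) (ball (0:ℂ) 1) :=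
    fun z hz => ((hf z hz).cexp)
  have hnorm : ∀ z ∈ ball (0:ℂ) 1, ‖Complex.exp (f z)‖ = Real.exp c := by
    intro z hz
    rw [Complex.norm_exp, hre z hz]
  have hmax : IsMaxOn (norm ∘ fun z => Complex.exp (f z)) (ball (0:ℂ) 1) 0 := by
    intro z hz
    simp only [Function.comp_apply, mem_setOf_eq]
    rw [hnorm z hz, hnorm 0 h0]
  have hconst : EqOn (fun z => Complex.exp (f z)) (Function.const ℂ (Complex.exp (f 0)))
      (ball (0:ℂ) 1) :=
    Complex.eqOn_of_isPreconnected_of_isMaxOn_norm (convex_ball (0:ℂ) 1).isPreconnected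
      isOpen_ball hφd h0 hmax
  have hderiv0 : ∀ z ∈ ball (0:ℂ) 1, fderivWithin ℂ f (ball (0:ℂ) 1) z = 0 := by
    intro z hz
    have hfz : DifferentiableAt ℂ f z := (hf z hz).differentiableAt (isOpen_ball.mem_nhds hz)
    have hd : HasDerivAt f (deriv f z) z := hfz.hasDerivAt
    have hφ : HasDerivAt (fun z => Complex.exp (f z)) (Complex.exp (f z) * deriv f z) z := hd.cexp
    have hev : (fun z => Complex.exp (f z)) =ᶠ[nhds z] Function.const ℂ (Complex.exp (f 0)) :=
      Filter.eventuallyEq_of_mem (isOpen_ball.mem_nhds hz) hconst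
    have hφ' : HasDerivAt (fun z => Complex.exp (f z)) 0 z :=
      (hasDerivAt_const z (Complex.exp (f 0))).congr_of_eventuallyEq hev
    have : Complex.exp (f z) * deriv f z = 0 := hφ.unique hφ'
    have hdz : deriv f z = 0 := by
      rcases mul_eq_zero.1 this with h | h
      · exact absurd h (Complex.exp_ne_zero _)
      · exact h
    have : HasFDerivAt f (ContinuousLinearMap.smulRight (1 : ℂ →L[ℂ] ℂ) (0:ℂ)) z := by
      rw [← hdz]; exact hd.hasFDerivAt
    rw [this.hasFDerivWithinAt.fderivWithin (isOpen_ball.uniqueDiffWithinAt hz)]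
    ext x
    simp
  intro z hz
  exact (convex_ball (0:ℂ) 1).is_const_of_fderivWithin_eq_zero hf hderiv0 hz h0

lemma one_sub_ne' {w ζ : ℂ} (hw : ‖w‖ < 1) (hζ : ‖ζ‖ ≤ 1) : 1 - ζ * (starRingEnd ℂ) w ≠ 0 := by
  intro h
  have h1 : ζ * (starRingEnd ℂ) w = 1 := by linear_combination -h
  have : ‖ζ * (starRingEnd ℂ) w‖ < 1 := by
    rw [norm_mul, RCLike.norm_conj]
    nlinarith [norm_nonneg w, norm_nonneg ζ]
  rw [h1] at this; simp at this

lemma conj_swap (w ζ : ℂ) :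
    (1 - ζ * (starRingEnd ℂ) w)⁻¹ = (starRingEnd ℂ) ((1 - w * (starRingEnd ℂ) ζ)⁻¹) := by
  rw [map_inv₀, map_sub, map_one, map_mul, Complex.conj_conj, mul_comm]

lemma norm_inv_le' {w ζ : ℂ} (hw : ‖w‖ < 1) (hζ : ‖ζ‖ ≤ 1) :
    ‖(1 - ζ * (starRingEnd ℂ) w)⁻¹‖ ≤ (1 - ‖w‖)⁻¹ := by
  rw [conj_swap, RCLike.norm_conj]
  exact norm_inv_le hw hζ

theorem stmt3 (b : ℂ → ℂ)
    (hb : DifferentiableOn ℂ b (ball (0 : ℂ) 1))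
    (hbmap : ∀ z ∈ ball (0 : ℂ) 1, b z ∈ ball (0 : ℂ) 1)
    (α : ℂ) (hα : ‖α‖ = 1)
    (σ : Measure ℂ) (hσfin : IsFiniteMeasure σ)
    (hσsupp : σ (sphere (0 : ℂ) 1)ᶜ = 0)
    (hσ : ∀ z ∈ ball (0 : ℂ) 1,
      ∫ ζ, (1 - ‖z‖ ^ 2) / ‖ζ - z‖ ^ 2 ∂σ = (1 - ‖b z‖ ^ 2) / ‖α - b z‖ ^ 2) :
    ∀ z ∈ ball (0 : ℂ) 1, ∀ w ∈ ball (0 : ℂ) 1,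
      ∫ ζ, (1 - z * (starRingEnd ℂ) ζ)⁻¹ * (1 - ζ * (starRingEnd ℂ) w)⁻¹ ∂σ =
        (1 - b z * (starRingEnd ℂ) (b w)) /
          ((1 - (starRingEnd ℂ) α * b z) * (1 - α * (starRingEnd ℂ) (b w))) *
          (1 - z * (starRingEnd ℂ) w)⁻¹ := by
  intro z hz w hw
  have hz' : ‖z‖ < 1 := mem_ball_zero_iff.1 hz
  have hw' : ‖w‖ < 1 := mem_ball_zero_iff.1 hw
  have hbz' : ‖b z‖ < 1 := mem_ball_zero_iff.1 (hbmap z hz)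
  have hbw' : ‖b w‖ < 1 := mem_ball_zero_iff.1 (hbmap w hw)
  set m : ℝ := (σ univ).toReal with hm
  set F : ℂ → ℂ := fun x => ∫ ζ, (1 - x * (starRingEnd ℂ) ζ)⁻¹ ∂σ with hF
  set g : ℂ → ℂ := fun x => (1 - (starRingEnd ℂ) α * b x)⁻¹ with hg
  have hαne : ∀ x ∈ ball (0:ℂ) 1, (1 : ℂ) - (starRingEnd ℂ) α * b x ≠ 0 := by
    intro x hx
    have := one_sub_ne (mem_ball_zero_iff.1 (hbmap x hx)) hα.le
    simpa [mul_comm] using this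
  -- Poisson identity
  have hPoisson : ∀ x ∈ ball (0:ℂ) 1, 2 * (F x).re - m = 2 * (g x).re - 1 := by
    intro x hx
    have hx' : ‖x‖ < 1 := mem_ball_zero_iff.1 hx
    have hbx' : ‖b x‖ < 1 := mem_ball_zero_iff.1 (hbmap x hx)
    have hint : Integrable (fun ζ => (1 - x * (starRingEnd ℂ) ζ)⁻¹) σ :=
      integrable_aux σ hσsupp (meas1 x) (fun ζ hζ => norm_inv_le hx' hζ.le)
    have h1 : ∫ ζ, (1 - ‖x‖^2)/‖ζ - x‖^2 ∂σ
        = ∫ ζ, (2 * ((1 - x * (starRingEnd ℂ) ζ)⁻¹).re - 1) ∂σ := by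
      apply integral_congr_ae
      filter_upwards [ae_sphere σ hσsupp] with ζ hζ
      exact re_cauchy hx' hζ
    have hintre : Integrable (fun ζ => ((1 - x * (starRingEnd ℂ) ζ)⁻¹).re) σ := by
      simpa using hint.re
    have h2 : ∫ ζ, (2 * ((1 - x * (starRingEnd ℂ) ζ)⁻¹).re - 1) ∂σ = 2 * (F x).re - m := by
      rw [integral_sub (hintre.const_mul 2) (integrable_const 1),
        integral_const_mul, integral_const]
      have h3 := integral_re hint
      simp only [RCLike.re_to_complex] at h3
      rw [h3]
      simp [hm, smul_eq_mul, measureReal_def, hF]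
    have h4 : (1 - ‖b x‖^2)/‖α - b x‖^2 = 2 * (g x).re - 1 := by
      rw [re_cauchy hbx' hα, hg]
      simp only [mul_comm]
    have h5 := hσ x hx
    rw [h1, h2] at h5
    rw [h5, ← h4]
  -- constancy of F - g
  have hgd : DifferentiableOn ℂ g (ball (0:ℂ) 1) := by
    rw [hg]
    exact DifferentiableOn.inv ((differentiableOn_const 1).sub
      ((differentiableOn_const _).mul hb)) hαne
  have hhd : DifferentiableOn ℂ (fun x => F x - g x) (ball (0:ℂ) 1) :=
    (Fdiff σ hσsupp).sub hgd
  have hre : ∀ x ∈ ball (0:ℂ) 1, ((fun x => F x - g x) x).re = (m - 1)/2 := by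
    intro x hx
    have := hPoisson x hx
    simp only [Complex.sub_re]
    linarith
  have hconst := const_of_re hhd hre
  set C : ℂ := F 0 - g 0 with hC
  have hCre : C.re = (m - 1)/2 := hre 0 (mem_ball_self one_pos)
  have hCconj : C + (starRingEnd ℂ) C = (m : ℂ) - 1 := by
    rw [Complex.add_conj, hCre]
    push_cast
    ring
  have hFz : F z = g z + C := by
    have := hconst z hz
    linear_combination this
  have hFw : F w = g w + C := by
    have := hconst w hw
    linear_combination this
  -- integrability
  have hint1 : Integrable (fun ζ => (1 - z * (starRingEnd ℂ) ζ)⁻¹) σ :=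
    integrable_aux σ hσsupp (meas1 z) (fun ζ hζ => norm_inv_le hz' hζ.le)
  have hint2 : Integrable (fun ζ => (1 - ζ * (starRingEnd ℂ) w)⁻¹) σ :=
    integrable_aux σ hσsupp (meas2 w) (fun ζ hζ => norm_inv_le' hw' hζ.le)
  have hIw : ∫ ζ, (1 - ζ * (starRingEnd ℂ) w)⁻¹ ∂σ = (starRingEnd ℂ) (F w) := by
    rw [show (fun ζ => (1 - ζ * (starRingEnd ℂ) w)⁻¹)
        = fun ζ => (starRingEnd ℂ) ((1 - w * (starRingEnd ℂ) ζ)⁻¹) from funext (conj_swap w)]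
    exact integral_conj
  -- pointwise product identity
  have hprod : ∀ᵐ ζ ∂σ, (1 - z * (starRingEnd ℂ) ζ)⁻¹ * (1 - ζ * (starRingEnd ℂ) w)⁻¹
      = (1 - z * (starRingEnd ℂ) w)⁻¹ *
        ((1 - z * (starRingEnd ℂ) ζ)⁻¹ + ((1 - ζ * (starRingEnd ℂ) w)⁻¹ - 1)) := by
    filter_upwards [ae_sphere σ hσsupp] with ζ hζ
    have h1 : (1:ℂ) - z * (starRingEnd ℂ) ζ ≠ 0 := one_sub_ne hz' hζ.le
    have h2 : (1:ℂ) - ζ * (starRingEnd ℂ) w ≠ 0 := one_sub_ne' hw' hζ.le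
    have h3 : (1:ℂ) - z * (starRingEnd ℂ) w ≠ 0 := one_sub_ne hz' hw'.le
    have hζ1 : ζ * (starRingEnd ℂ) ζ = 1 := by
      rw [Complex.mul_conj, Complex.normSq_eq_norm_sq, hζ]
      norm_num
    field_simp
    linear_combination ((1 - z * (starRingEnd ℂ) w) * z * (starRingEnd ℂ) w
      + z ^ 2 * (starRingEnd ℂ) w ^ 2) * hζ1
  have hI : (∫ ζ, (1 - z * (starRingEnd ℂ) ζ)⁻¹ * (1 - ζ * (starRingEnd ℂ) w)⁻¹ ∂σ)
      = (1 - z * (starRingEnd ℂ) w)⁻¹ * (F z + ((starRingEnd ℂ) (F w) - m)) := by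
    have hint2' : Integrable (fun ζ => (1 - ζ * (starRingEnd ℂ) w)⁻¹ - 1) σ := by
      exact hint2.sub (integrable_const 1)
    rw [integral_congr_ae hprod, integral_const_mul,
      integral_add hint1 hint2',
      integral_sub hint2 (integrable_const 1), hIw, integral_const]
    rw [hF]
    norm_num [hm, Complex.real_smul, measureReal_def]
  rw [hI, hFz, hFw]
  have hcgw : (starRingEnd ℂ) (g w) = (1 - α * (starRingEnd ℂ) (b w))⁻¹ := by
    rw [hg]
    simp only [map_inv₀, map_sub, map_one, map_mul, Complex.conj_conj]
  have hA : (1:ℂ) - (starRingEnd ℂ) α * b z ≠ 0 := hαne z hz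
  have hB : (1:ℂ) - α * (starRingEnd ℂ) (b w) ≠ 0 := by
    rw [show (1:ℂ) - α * (starRingEnd ℂ) (b w)
        = (starRingEnd ℂ) (1 - (starRingEnd ℂ) α * b w) by
      simp only [map_sub, map_one, map_mul, Complex.conj_conj]]
    exact (map_ne_zero (starRingEnd ℂ)).mpr (hαne w hw)
  have hαα : α * (starRingEnd ℂ) α = 1 := by
    rw [Complex.mul_conj, Complex.normSq_eq_norm_sq, hα]
    norm_num
  have hzw : (1:ℂ) - z * (starRingEnd ℂ) w ≠ 0 := one_sub_ne hz' hw'.le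
  rw [map_add, hcgw]
  have hgoal : g z + C + ((1 - α * (starRingEnd ℂ) (b w))⁻¹ + (starRingEnd ℂ) C - m)
      = (1 - b z * (starRingEnd ℂ) (b w)) /
        ((1 - (starRingEnd ℂ) α * b z) * (1 - α * (starRingEnd ℂ) (b w))) := by
    rw [hg]
    have hCm : C + (starRingEnd ℂ) C - (m:ℂ) = -1 := by rw [hCconj]; ring
    field_simp
    linear_combination ((1 - (starRingEnd ℂ) α * b z) * (1 - α * (starRingEnd ℂ) (b w))) * hCm
      - (b z * (starRingEnd ℂ) (b w)) * hαα
  rw [hgoal]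
  ring
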